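/- Let F_A be the free group over a finite alphabet A and let H, K be nontrivial finitely generated subgroups of F_A. If the core graphs C(H) and C(K) of their Stallings automata are isomorphic as labeled graphs, then H and K are conjugate in F_A; conversely, conjugate subgroups have isomorphic core graphs. -/

import Mathlib

set_option linter.unusedSectionVars false
set_option linter.unusedVariables false
set_option maxHeartbeats 1000000

open FreeGroup List

variable {A : Type} [DecidableEq A]

/-- letter inverse -/
def invL (x : A × Bool) : A × Bool := (x.1, !x.2)

@[simp] lemma invL_invL (x : A × Bool) : invL (invL x) = x := by simp [invL]

lemma invL_ne (x : A × Bool) : invL x ≠ x := by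
  simp [invL, Prod.ext_iff]

lemma invL_eq_iff {x y : A × Bool} : invL x = y ↔ x = invL y := by
  constructor <;> rintro rfl <;> simp

/-- no-cancellation relation -/
def okL (x y : A × Bool) : Prop := y ≠ invL x

/-- reduced word as a chain condition -/
def IsRed (w : List (A × Bool)) : Prop := w.Chain' okL

lemma not_chain'_decomp {α : Type} {R : α → α → Prop} :
    ∀ {l : List α}, ¬ l.Chain' R → ∃ l₁ a b l₂, l = l₁ ++ a :: b :: l₂ ∧ ¬ R a b := by
  intro l
  induction l with
  | nil => intro h; exact absurd List.isChain_nil h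
  | cons a t ih =>
    intro h
    cases t with
    | nil => exact absurd (List.isChain_singleton a) h
    | cons b t' =>
      rw [List.Chain', List.isChain_cons_cons] at h
      push_neg at h
      by_cases hab : R a b
      · obtain ⟨l₁, c, d, l₂, hd, hR⟩ := ih (h hab)
        exact ⟨a :: l₁, c, d, l₂, by simp [hd], hR⟩
      · exact ⟨[], a, b, t', by simp, hab⟩

lemma isRed_reduce (w : List (A × Bool)) : IsRed (FreeGroup.reduce w) := by
  by_contra h
  obtain ⟨l₁, a, b, l₂, hd, hR⟩ := not_chain'_decomp h
  have : b = invL a := not_not.mp hR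
  subst this
  exact FreeGroup.reduce.not (x := a.1) (b := a.2) (L₂ := l₁) (L₃ := l₂)
    (by simpa [invL] using hd)

lemma reduce_eq_of_isRed : ∀ {w : List (A × Bool)}, IsRed w → FreeGroup.reduce w = w := by
  intro w
  induction w with
  | nil => intro _; rfl
  | cons x t ih =>
    intro h
    have ht : IsRed t := (List.isChain_cons.mp h).2
    have hr := ih ht
    rw [FreeGroup.reduce.cons, hr]
    cases t with
    | nil => rfl
    | cons y t' =>
      have hxy : okL x y := (List.isChain_cons_cons.mp h).1
      have : ¬ (x.1 = y.1 ∧ x.2 = !y.2) := by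
        rintro ⟨h1, h2⟩
        exact hxy (by simp [invL, Prod.ext_iff, h1, h2])
      simp [this]

lemma isRed_iff {w : List (A × Bool)} : IsRed w ↔ FreeGroup.reduce w = w :=
  ⟨reduce_eq_of_isRed, fun h => h ▸ isRed_reduce w⟩

lemma IsRed.append_iff {u v : List (A × Bool)} :
    IsRed (u ++ v) ↔ IsRed u ∧ IsRed v ∧ ∀ x ∈ u.getLast?, ∀ y ∈ v.head?, okL x y :=
  List.isChain_append

lemma invRev_cons (x : A × Bool) (w : List (A × Bool)) :
    FreeGroup.invRev (x :: w) = FreeGroup.invRev w ++ [invL x] := by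
  simp [FreeGroup.invRev, invL]

lemma invRev_append (u v : List (A × Bool)) :
    FreeGroup.invRev (u ++ v) = FreeGroup.invRev v ++ FreeGroup.invRev u := by
  simp [FreeGroup.invRev]

lemma invRev_singleton (x : A × Bool) : FreeGroup.invRev [x] = [invL x] := by
  simp [FreeGroup.invRev, invL]

lemma IsRed.invRev {w : List (A × Bool)} (h : IsRed w) : IsRed (FreeGroup.invRev w) := by
  rw [isRed_iff] at h ⊢
  rw [FreeGroup.reduce_invRev, h]

/-- cyclically reduced -/
def CycRed (w : List (A × Bool)) : Prop := IsRed (w ++ w)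

lemma cycRed_iff {w : List (A × Bool)} :
    CycRed w ↔ IsRed w ∧ ∀ x ∈ w.getLast?, ∀ y ∈ w.head?, okL x y := by
  unfold CycRed
  rw [IsRed.append_iff]
  tauto

lemma CycRed.isRed {w : List (A × Bool)} (h : CycRed w) : IsRed w := (cycRed_iff.mp h).1

lemma CycRed.rotate {s t : List (A × Bool)} (h : CycRed (s ++ t)) : CycRed (t ++ s) := by
  rcases eq_or_ne s [] with rfl | hs
  · simpa using h
  rcases eq_or_ne t [] with rfl | ht
  · simpa using h
  rw [cycRed_iff] at h ⊢
  obtain ⟨hred, hj⟩ := h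
  rw [IsRed.append_iff] at hred
  obtain ⟨hs', ht', hst⟩ := hred
  refine ⟨?_, ?_⟩
  · rw [IsRed.append_iff]
    refine ⟨ht', hs', ?_⟩
    intro x hx y hy
    exact hj x (by rw [List.getLast?_append_of_ne_nil _ ht]; exact hx)
      y (by rw [List.head?_append_of_ne_nil _ hs]; exact hy)
  · intro x hx y hy
    rw [List.getLast?_append_of_ne_nil _ hs] at hx
    rw [List.head?_append_of_ne_nil _ ht] at hy
    exact hst x hx y hy

lemma CycRed.invRev {w : List (A × Bool)} (h : CycRed w) : CycRed (FreeGroup.invRev w) := by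
  have : IsRed (FreeGroup.invRev (w ++ w)) := IsRed.invRev h
  rwa [invRev_append] at this



/-- Reading a word over `Ã = A × Bool` from a state of a partial deterministic automaton. -/
def readWord {Q A : Type} (δ : Q → A × Bool → Option Q) : Q → List (A × Bool) → Option Q
  | q, [] => some q
  | q, x :: w =>
    match δ q x with
    | none => none
    | some q' => readWord δ q' w

/-- The vertices of the core `C(K)` of a Stallings automaton: those lying on a loop
labeled by a nonempty cyclically reduced word (i.e. a word `u` with `u ++ u` reduced). -/
def coreSet {Q A : Type} [DecidableEq A] (δ : Q → A × Bool → Option Q) : Set Q :=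
  {q | ∃ u : List (A × Bool), u ≠ [] ∧ FreeGroup.reduce (u ++ u) = u ++ u ∧
        readWord δ q u = some q}


variable {A Q : Type} [DecidableEq A] {δ : Q → A × Bool → Option Q}

@[simp] lemma readWord_nil (q : Q) : readWord δ q [] = some q := rfl

lemma readWord_cons (q : Q) (x : A × Bool) (w : List (A × Bool)) :
    readWord δ q (x :: w) = (δ q x).bind (fun q' => readWord δ q' w) := by
  rw [readWord]
  cases δ q x <;> simp

lemma readWord_append (q : Q) (u v : List (A × Bool)) :
    readWord δ q (u ++ v) = (readWord δ q u).bind (fun q' => readWord δ q' v) := by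
  induction u generalizing q with
  | nil => simp
  | cons x t ih =>
    rw [List.cons_append, readWord_cons, readWord_cons]
    cases δ q x with
    | none => simp
    | some q' => simp [ih]

lemma readWord_append_some {q s : Q} {u v : List (A × Bool)}
    (h : readWord δ q (u ++ v) = some s) :
    ∃ m, readWord δ q u = some m ∧ readWord δ m v = some s := by
  rw [readWord_append] at h
  cases hm : readWord δ q u with
  | none => rw [hm] at h; simp at h
  | some m => rw [hm] at h; exact ⟨m, rfl, h⟩

lemma readWord_append_of {q m s : Q} {u v : List (A × Bool)}
    (h1 : readWord δ q u = some m) (h2 : readWord δ m v = some s) :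
    readWord δ q (u ++ v) = some s := by
  rw [readWord_append, h1]; exact h2

lemma readWord_cons_some {q s : Q} {x : A × Bool} {w : List (A × Bool)}
    (h : readWord δ q (x :: w) = some s) :
    ∃ m, δ q x = some m ∧ readWord δ m w = some s := by
  rw [readWord_cons] at h
  cases hm : δ q x with
  | none => rw [hm] at h; simp at h
  | some m => rw [hm] at h; exact ⟨m, rfl, h⟩

lemma readWord_singleton {q s : Q} {x : A × Bool} :
    readWord δ q [x] = some s ↔ δ q x = some s := by
  rw [readWord_cons]
  cases δ q x <;> simp

section Inv

variable (hinv : ∀ (p q : Q) (a : A) (b : Bool), δ p (a, b) = some q ↔ δ q (a, !b) = some p)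
include hinv

lemma step_inv {q s : Q} {x : A × Bool} (h : δ q x = some s) : δ s (invL x) = some q := by
  obtain ⟨a, b⟩ := x
  exact (hinv q s a b).mp h

lemma readWord_invRev {q s : Q} {w : List (A × Bool)} (h : readWord δ q w = some s) :
    readWord δ s (FreeGroup.invRev w) = some q := by
  induction w generalizing q with
  | nil => simp_all
  | cons x t ih =>
    obtain ⟨m, h1, h2⟩ := readWord_cons_some h
    rw [invRev_cons]
    exact readWord_append_of (ih h2) (readWord_singleton.mpr (step_inv hinv h1))

/-- co-determinism -/
lemma codet {q q' s : Q} {x : A × Bool} (h : δ q x = some s) (h' : δ q' x = some s) :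
    q = q' := by
  have := step_inv hinv h
  have := step_inv hinv h'
  simp_all

lemma readWord_red_step {q s : Q} {w w' : List (A × Bool)} (hstep : FreeGroup.Red.Step w w')
    (h : readWord δ q w = some s) : readWord δ q w' = some s := by
  cases hstep with
  | @not L₁ L₂ x b =>
    obtain ⟨m, h1, h2⟩ := readWord_append_some h
    obtain ⟨m2, hx1, h3⟩ := readWord_cons_some h2
    obtain ⟨m3, hx2, h4⟩ := readWord_cons_some h3
    have : δ m2 (invL (x, b)) = some m := step_inv hinv hx1
    have hm3 : m3 = m := by
      rw [show ((x, !b) : A × Bool) = invL (x, b) from rfl] at hx2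
      simp_all
    exact readWord_append_of h1 (hm3 ▸ h4)

lemma readWord_red {q s : Q} {w w' : List (A × Bool)} (hred : FreeGroup.Red w w')
    (h : readWord δ q w = some s) : readWord δ q w' = some s := by
  induction hred with
  | refl => exact h
  | tail _ hstep ih => exact readWord_red_step hinv hstep ih

lemma readWord_reduce {q s : Q} {w : List (A × Bool)} (h : readWord δ q w = some s) :
    readWord δ q (FreeGroup.reduce w) = some s :=
  readWord_red hinv FreeGroup.reduce.red h

end Inv
section Stallings

variable {A Q : Type} [DecidableEq A] {δ : Q → A × Bool → Option Q} {p : Q}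
  {S : Subgroup (FreeGroup A)}
  (hinv : ∀ (p q : Q) (a : A) (b : Bool), δ p (a, b) = some q ↔ δ q (a, !b) = some p)
  (hlink : ∀ w : List (A × Bool), FreeGroup.reduce w = w →
      (FreeGroup.mk w ∈ S ↔ readWord δ p w = some p))

include hinv hlink

/-- any loop at the basepoint gives a member of S -/
lemma loop_mem {w : List (A × Bool)} (h : readWord δ p w = some p) : FreeGroup.mk w ∈ S := by
  have h2 := readWord_reduce hinv h
  have := (hlink (FreeGroup.reduce w) FreeGroup.reduce.idem).mpr h2
  rwa [FreeGroup.reduce.self] at this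

/-- a member of S, as a reduced word, is a loop at the basepoint -/
lemma mem_loop {g : FreeGroup A} (h : g ∈ S) : readWord δ p g.toWord = some p :=
  (hlink g.toWord (FreeGroup.reduce_toWord g)).mp (by rwa [FreeGroup.mk_toWord])

/-- two paths from the basepoint to the same state give S-equivalent words -/
lemma paths_coset {w w' : List (A × Bool)} {q : Q} (h : readWord δ p w = some q)
    (h' : readWord δ p w' = some q) : FreeGroup.mk w * (FreeGroup.mk w')⁻¹ ∈ S := by
  have : readWord δ p (w ++ FreeGroup.invRev w') = some p :=
    readWord_append_of h (readWord_invRev hinv h')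
  have := loop_mem hinv hlink this
  rwa [← FreeGroup.mul_mk, ← FreeGroup.inv_mk] at this

/-- the state reached is determined by the S-coset of the word read -/
lemma coset_state {w w' : List (A × Bool)} {q q' : Q} (h : readWord δ p w = some q)
    (h' : readWord δ p w' = some q') (hc : FreeGroup.mk w * (FreeGroup.mk w')⁻¹ ∈ S) :
    q = q' := by
  set z := FreeGroup.mk w * (FreeGroup.mk w')⁻¹ with hz
  have hzl : readWord δ p z.toWord = some p := mem_loop hinv hlink hc
  have h2 : readWord δ p (z.toWord ++ w') = some q' := readWord_append_of hzl h'
  have h3 : readWord δ p (FreeGroup.reduce (z.toWord ++ w')) = some q' :=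
    readWord_reduce hinv h2
  have h4 : readWord δ p (FreeGroup.reduce w) = some q := readWord_reduce hinv h
  have hmk : FreeGroup.mk (z.toWord ++ w') = FreeGroup.mk w := by
    rw [← FreeGroup.mul_mk, FreeGroup.mk_toWord, hz]
    group
  have : FreeGroup.reduce (z.toWord ++ w') = FreeGroup.reduce w := by
    have := congrArg FreeGroup.toWord hmk
    rwa [FreeGroup.toWord_mk, FreeGroup.toWord_mk] at this
  rw [this, h4] at h3
  exact Option.some.inj h3

end Stallings
section LemmaF

variable {A Q : Type} [DecidableEq A] {δ : Q → A × Bool → Option Q} {p : Q}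
  {S : Subgroup (FreeGroup A)}
  (hinv : ∀ (p q : Q) (a : A) (b : Bool), δ p (a, b) = some q ↔ δ q (a, !b) = some p)
  (hlink : ∀ w : List (A × Bool), FreeGroup.reduce w = w →
      (FreeGroup.mk w ∈ S ↔ readWord δ p w = some p))

lemma mk_invL (x : A × Bool) : FreeGroup.mk [invL x] = (FreeGroup.mk [x])⁻¹ := by
  rw [FreeGroup.inv_mk, invRev_singleton]

include hinv hlink

/-- Key lemma: if `g c g⁻¹ ∈ S` with `c` nonempty cyclically reduced, then there is a state
`q` carrying `c` as a loop, reachable by a word in the coset `S g`. -/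
lemma lemmaF : ∀ (G : List (A × Bool)), IsRed G → ∀ c, c ≠ [] → CycRed c →
    FreeGroup.mk G * FreeGroup.mk c * (FreeGroup.mk G)⁻¹ ∈ S →
    ∃ q w, readWord δ p w = some q ∧ readWord δ q c = some q ∧
      FreeGroup.mk w * (FreeGroup.mk G)⁻¹ ∈ S := by
  intro G
  induction G using List.reverseRecOn with
  | nil =>
    intro _ c hc hcr hmem
    have h1 : FreeGroup.mk ([] : List (A × Bool)) = 1 := FreeGroup.one_eq_mk.symm
    rw [h1] at hmem
    have hmem' : FreeGroup.mk c ∈ S := by simpa using hmem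
    have : readWord δ p c = some p := (hlink c (reduce_eq_of_isRed hcr.isRed)).mp hmem'
    refine ⟨p, [], readWord_nil p, this, ?_⟩
    rw [h1]
    simpa using one_mem S
  | append_singleton G' l0 ih =>
    intro hredG c hc hcr hmem
    have hredG' : IsRed G' := (IsRed.append_iff.mp hredG).1
    by_cases hA : c.head? = some (invL l0)
    · -- cancellation at the left junction: rotate c
      obtain ⟨y, ct, rfl⟩ : ∃ y ct, c = y :: ct := by
        cases c with
        | nil => exact absurd rfl hc
        | cons y ct => exact ⟨y, ct, rfl⟩
      have hy : y = invL l0 := by simpa using hA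
      subst hy
      set c' := ct ++ [invL l0] with hc'
      have hcr' : CycRed c' := CycRed.rotate (s := [invL l0]) (t := ct) hcr
      have hc'ne : c' ≠ [] := by simp [hc']
      have hmkeq : FreeGroup.mk G' * FreeGroup.mk c' * (FreeGroup.mk G')⁻¹ =
          FreeGroup.mk (G' ++ [l0]) * FreeGroup.mk (invL l0 :: ct) *
            (FreeGroup.mk (G' ++ [l0]))⁻¹ := by
        rw [show (invL l0 :: ct) = [invL l0] ++ ct from rfl, hc',
          ← FreeGroup.mul_mk, ← FreeGroup.mul_mk, ← FreeGroup.mul_mk, mk_invL]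
        group
      obtain ⟨q, w, hw, hloop, hcos⟩ := ih hredG' c' hc'ne hcr' (by rw [hmkeq]; exact hmem)
      obtain ⟨m, h1, h2⟩ := readWord_append_some (u := ct) (v := [invL l0]) hloop
      refine ⟨m, w ++ ct, readWord_append_of hw h1, ?_, ?_⟩
      · exact readWord_append_of (u := [invL l0]) (v := ct) h2 h1
      · have key : FreeGroup.mk (w ++ ct) * (FreeGroup.mk (G' ++ [l0]))⁻¹ =
            (FreeGroup.mk w * (FreeGroup.mk G')⁻¹) *
            (FreeGroup.mk G' * FreeGroup.mk c' * (FreeGroup.mk G')⁻¹) := by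
          rw [hc', ← FreeGroup.mul_mk, ← FreeGroup.mul_mk, ← FreeGroup.mul_mk, mk_invL]
          group
        rw [key]
        exact mul_mem hcos (by rw [hmkeq]; exact hmem)
    · by_cases hB : c.getLast? = some l0
      · -- cancellation at the right junction: rotate c the other way
        obtain ⟨ct, rfl⟩ : ∃ ct, c = ct ++ [l0] := List.getLast?_eq_some_iff.mp hB
        set c' := l0 :: ct with hc'
        have hcr' : CycRed c' := CycRed.rotate (s := ct) (t := [l0]) hcr
        have hc'ne : c' ≠ [] := by simp [hc']
        have hmkeq : FreeGroup.mk G' * FreeGroup.mk c' * (FreeGroup.mk G')⁻¹ =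
            FreeGroup.mk (G' ++ [l0]) * FreeGroup.mk (ct ++ [l0]) *
              (FreeGroup.mk (G' ++ [l0]))⁻¹ := by
          rw [hc', show (l0 :: ct) = [l0] ++ ct from rfl,
            ← FreeGroup.mul_mk, ← FreeGroup.mul_mk, ← FreeGroup.mul_mk]
          group
        obtain ⟨q, w, hw, hloop, hcos⟩ := ih hredG' c' hc'ne hcr' (by rw [hmkeq]; exact hmem)
        obtain ⟨m, h1, h2⟩ := readWord_append_some (u := [l0]) (v := ct) hloop
        refine ⟨m, w ++ [l0], readWord_append_of hw h1, ?_, ?_⟩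
        · exact readWord_append_of (u := ct) (v := [l0]) h2 h1
        · have key : FreeGroup.mk (w ++ [l0]) * (FreeGroup.mk (G' ++ [l0]))⁻¹ =
              FreeGroup.mk w * (FreeGroup.mk G')⁻¹ := by
            rw [← FreeGroup.mul_mk, ← FreeGroup.mul_mk]
            group
          rw [key]; exact hcos
      · -- no junction cancellations: the whole word is reduced
        set W := (G' ++ [l0]) ++ (c ++ FreeGroup.invRev (G' ++ [l0])) with hW
        have hinvG : FreeGroup.invRev (G' ++ [l0]) = invL l0 :: FreeGroup.invRev G' := by
          rw [invRev_append, invRev_singleton]; rfl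
        have hredW : IsRed W := by
          rw [hW, IsRed.append_iff]
          refine ⟨hredG, ?_, ?_⟩
          · rw [IsRed.append_iff]
            refine ⟨hcr.isRed, hredG.invRev, ?_⟩
            intro x hx y hy
            rw [hinvG] at hy
            simp only [List.head?_cons, Option.mem_def, Option.some.injEq] at hy
            subst hy
            intro hbad
            rw [invL_eq_iff, invL_invL] at hbad
            exact hB (hbad ▸ hx)
          · intro x hx y hy
            rw [List.getLast?_append_of_ne_nil _ (by simp : [l0] ≠ [])] at hx
            simp only [List.getLast?_singleton, Option.mem_def, Option.some.injEq] at hx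
            subst hx
            rw [List.head?_append_of_ne_nil _ hc] at hy
            intro hbad
            exact hA (hbad ▸ hy)
        have hmkW : FreeGroup.mk W = FreeGroup.mk (G' ++ [l0]) * FreeGroup.mk c *
            (FreeGroup.mk (G' ++ [l0]))⁻¹ := by
          rw [hW]
          simp only [← FreeGroup.mul_mk, ← FreeGroup.inv_mk]
          group
        have hWloop : readWord δ p W = some p := by
          refine (hlink W (reduce_eq_of_isRed hredW)).mp ?_
          rw [hmkW]; exact hmem
        obtain ⟨q, hG, hrest⟩ := readWord_append_some hWloop
        obtain ⟨q₂, hcq, hback⟩ := readWord_append_some hrest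
        have : readWord δ p (FreeGroup.invRev (FreeGroup.invRev (G' ++ [l0]))) = some q₂ :=
          readWord_invRev hinv hback
        rw [FreeGroup.invRev_invRev] at this
        have hq2 : q₂ = q := by rw [hG] at this; exact (Option.some.inj this).symm
        rw [hq2] at hcq
        refine ⟨q, G' ++ [l0], hG, hcq, ?_⟩
        rw [mul_inv_cancel]
        exact one_mem S

end LemmaF
lemma isRed_cons_iff {A : Type} [DecidableEq A] {x : A × Bool} {w : List (A × Bool)} :
    IsRed (x :: w) ↔ (∀ y ∈ w.head?, okL x y) ∧ IsRed w := List.isChain_cons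

section Core

variable {A Q : Type} [DecidableEq A] {δ : Q → A × Bool → Option Q}

lemma coreP_iff {q : Q} : (∃ u, u ≠ [] ∧ CycRed u ∧ readWord δ q u = some q) ↔
    q ∈ coreSet δ := by
  unfold coreSet
  constructor
  · rintro ⟨u, h1, h2, h3⟩
    exact ⟨u, h1, reduce_eq_of_isRed h2, h3⟩
  · rintro ⟨u, h1, h2, h3⟩
    exact ⟨u, h1, isRed_iff.mpr h2, h3⟩

variable (hinv : ∀ (p q : Q) (a : A) (b : Bool), δ p (a, b) = some q ↔ δ q (a, !b) = some p)
include hinv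

/-- the target of an edge out of a core vertex along which a reduced nonempty loop exists
is in the core -/
lemma edge_target_core {q₀ t : Q} {x : A × Bool} {g : List (A × Bool)}
    (hq : q₀ ∈ coreSet δ) (hqt : δ q₀ x = some t) (hg : g ≠ [])
    (hgred : IsRed g) (hgloop : readWord δ t g = some t)
    (hhead : ∀ y ∈ g.head?, okL x y)
    (hlast : ∀ y ∈ g.getLast?, okL y (invL x)) : t ∈ coreSet δ := by
  obtain ⟨u, hune, hucyc, huloop⟩ := coreP_iff.mpr hq
  rcases eq_or_ne u.head? (some x) with hA | hA
  · -- u starts with x : t is on u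
    obtain ⟨ut, hu⟩ : ∃ ut, u = x :: ut := by
      cases u with
      | nil => exact absurd rfl hune
      | cons y ut => exact ⟨ut, by rw [show y = x by simpa using hA]⟩
    subst hu
    obtain ⟨m, h1, h2⟩ := readWord_cons_some huloop
    have hm : m = t := by rw [hqt] at h1; exact (Option.some.inj h1).symm
    subst hm
    rw [← coreP_iff]
    exact ⟨ut ++ [x], by simp, CycRed.rotate (s := [x]) (t := ut) hucyc,
      readWord_append_of h2 (readWord_singleton.mpr hqt)⟩
  · rcases eq_or_ne u.getLast? (some (invL x)) with hB | hB
    · -- u ends with x⁻¹ : t is on u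
      obtain ⟨ub, rfl⟩ := List.getLast?_eq_some_iff.mp hB
      obtain ⟨m, h1, h2⟩ := readWord_append_some huloop
      have hmx : δ m (invL x) = some q₀ := readWord_singleton.mp h2
      have hqm : δ q₀ x = some m := by
        have := step_inv hinv hmx
        rwa [invL_invL] at this
      have hm : m = t := by rw [hqt] at hqm; exact (Option.some.inj hqm).symm
      subst hm
      rw [← coreP_iff]
      exact ⟨[invL x] ++ ub, by simp, CycRed.rotate (s := ub) (t := [invL x]) hucyc,
        readWord_append_of (readWord_singleton.mpr hmx) h1⟩
    · -- generic case : go back to q₀, around u, and return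
      rw [← coreP_iff]
      refine ⟨[invL x] ++ u ++ [x] ++ g, by simp, ?_, ?_⟩
      · -- cyclically reduced
        rw [cycRed_iff]
        obtain ⟨f, u', rfl⟩ : ∃ f u', u = f :: u' := by
          cases u with
          | nil => exact absurd rfl hune
          | cons f u' => exact ⟨f, u', rfl⟩
        obtain ⟨g0, g', rfl⟩ : ∃ g0 g', g = g0 :: g' := by
          cases g with
          | nil => exact absurd rfl hg
          | cons g0 g' => exact ⟨g0, g', rfl⟩
        constructor
        · rw [IsRed.append_iff]
          refine ⟨?_, hgred, ?_⟩
          · rw [IsRed.append_iff]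
            refine ⟨?_, List.isChain_singleton _, ?_⟩
            · rw [show [invL x] ++ (f :: u') = invL x :: (f :: u') from rfl]
              rw [isRed_cons_iff]
              refine ⟨?_, hucyc.isRed⟩
              intro y hy
              simp only [List.head?_cons, Option.mem_def, Option.some.injEq] at hy
              subst hy
              intro hbad
              rw [invL_invL] at hbad
              exact hA (by simp [hbad])
            · -- junction (last u, x)
              intro y hy z hz
              simp only [List.head?_cons, Option.mem_def, Option.some.injEq] at hz
              subst hz
              rw [List.getLast?_append_of_ne_nil _ (by simp : (f :: u') ≠ [])] at hy
              intro hbad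
              apply hB
              rw [Option.mem_def] at hy
              rw [hy, hbad, invL_invL]
          · -- junction (x, head g)
            intro y hy z hz
            rw [List.getLast?_append_of_ne_nil _ (by simp : [x] ≠ [])] at hy
            simp only [List.getLast?_singleton, Option.mem_def, Option.some.injEq] at hy
            subst hy
            exact hhead z hz
        · -- cyclic junction (last g, x⁻¹)
          intro y hy z hz
          rw [List.getLast?_append_of_ne_nil _ (by simp : (g0 :: g') ≠ [])] at hy
          rw [List.head?_append_of_ne_nil _ (by simp), List.head?_append_of_ne_nil _ (by simp),
            List.head?_append_of_ne_nil _ (by simp)] at hz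
          simp only [List.head?_cons, Option.mem_def, Option.some.injEq] at hz
          subst hz
          exact hlast y hy
      · -- it is a loop at t
        have htq : δ t (invL x) = some q₀ := step_inv hinv hqt
        exact readWord_append_of (readWord_append_of (readWord_append_of
          (readWord_singleton.mpr htq) huloop) (readWord_singleton.mpr hqt)) hgloop

/-- Claim X : every vertex visited by a reduced loop based at a core vertex is in the core. -/
lemma visited_core : ∀ (n : ℕ) (γ : List (A × Bool)), γ.length ≤ n →
    ∀ q₀ : Q, q₀ ∈ coreSet δ → IsRed γ → readWord δ q₀ γ = some q₀ →
    ∀ γ₁ γ₂ s, γ = γ₁ ++ γ₂ → readWord δ q₀ γ₁ = some s → s ∈ coreSet δ := by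
  intro n
  induction n with
  | zero =>
    intro γ hlen q₀ hq₀ _ _ γ₁ γ₂ s hsplit hs
    have hγ : γ = [] := List.length_eq_zero_iff.mp (Nat.le_zero.mp hlen)
    rw [hγ] at hsplit
    obtain ⟨h1, _⟩ := List.append_eq_nil_iff.mp hsplit.symm
    rw [h1, readWord_nil] at hs
    rwa [← Option.some.inj hs]
  | succ n ih =>
    intro γ hlen q₀ hq₀ hγred hγloop γ₁ γ₂ s hsplit hs
    rcases eq_or_ne γ₁ [] with rfl | hγ₁
    · rw [readWord_nil] at hs
      rwa [← Option.some.inj hs]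
    rcases eq_or_ne γ₂ [] with rfl | hγ₂
    · rw [List.append_nil] at hsplit
      rw [← hsplit, hγloop] at hs
      rwa [← Option.some.inj hs]
    obtain ⟨y, γ₁', rfl⟩ : ∃ y γ₁', γ₁ = y :: γ₁' := by
      cases γ₁ with
      | nil => exact absurd rfl hγ₁
      | cons a b => exact ⟨a, b, rfl⟩
    obtain ⟨γ₂', x', rfl⟩ : ∃ γ₂' x', γ₂ = γ₂' ++ [x'] := by
      rcases List.eq_nil_or_concat γ₂ with h | ⟨a, b, h⟩
      · exact absurd h hγ₂
      · exact ⟨a, b, by simpa using h⟩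
    by_cases hcyc : CycRed γ
    · -- s lies on the cyclically reduced loop γ
      rw [hsplit] at hγloop hcyc
      obtain ⟨m, h1, h2⟩ := readWord_append_some hγloop
      obtain rfl : m = s := by rw [hs] at h1; exact (Option.some.inj h1).symm
      rw [← coreP_iff]
      exact ⟨γ₂' ++ [x'] ++ (y :: γ₁'), by simp, CycRed.rotate hcyc,
        readWord_append_of h2 hs⟩
    · -- γ is not cyclically reduced : peel the outer letters
      have hyx : y = invL x' := by
        rw [cycRed_iff] at hcyc
        push_neg at hcyc
        obtain ⟨a, ha, b, hb, hab⟩ := hcyc hγred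
        have hhead : γ.head? = some y := by rw [hsplit]; rfl
        have hlast : γ.getLast? = some x' := by
          rw [hsplit, show (y :: γ₁') ++ (γ₂' ++ [x']) = (y :: (γ₁' ++ γ₂')) ++ [x'] by simp]
          rw [List.getLast?_append_of_ne_nil _ (by simp : ([x'] : List (A × Bool)) ≠ [])]
          rfl
        rw [hlast, Option.mem_def, Option.some.injEq] at ha
        rw [hhead, Option.mem_def, Option.some.injEq] at hb
        rw [← ha, ← hb] at hab
        exact not_not.mp hab
      subst hyx
      set g := γ₁' ++ γ₂' with hgdef
      have hγeq : γ = invL x' :: (g ++ [x']) := by rw [hsplit]; simp [hgdef]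
      rw [hγeq] at hγloop hγred
      obtain ⟨t, ht1, ht2⟩ := readWord_cons_some hγloop
      obtain ⟨m, hm1, hm2⟩ := readWord_append_some ht2
      have hmx : δ m x' = some q₀ := readWord_singleton.mp hm2
      have hmt : m = t := by
        have h1 := step_inv hinv hmx
        rw [ht1] at h1
        exact (Option.some.inj h1).symm
      subst hmt
      -- g is a nonempty reduced loop at t
      have hgne : g ≠ [] := by
        rintro hgnil
        rw [hgnil] at hγred
        simp only [List.nil_append] at hγred
        have h2 := (isRed_cons_iff.mp hγred).1 x' (by rfl)
        simp [okL, invL_invL] at h2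
      have hgred2 : IsRed g := by
        have := (isRed_cons_iff.mp hγred).2
        exact (IsRed.append_iff.mp this).1
      -- t is in the core
      have htcore : m ∈ coreSet δ := by
        refine edge_target_core hinv hq₀ ht1 hgne hgred2 hm1 ?_ ?_
        · intro z hz
          have := (isRed_cons_iff.mp hγred).1 z
          rw [List.head?_append_of_ne_nil _ hgne] at this
          exact this hz
        · intro z hz
          have h2 := (isRed_cons_iff.mp hγred).2
          rw [IsRed.append_iff] at h2
          have := h2.2.2 z hz x' (by rfl)
          rwa [invL_invL]
      -- apply the inductive hypothesis inside g
      rcases eq_or_ne γ₁' [] with rfl | hγ₁'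
      · have hst : s = m := by
          rw [readWord_cons, ht1] at hs
          simpa using hs.symm
        rwa [hst]
      · have hs' : readWord δ m γ₁' = some s := by
          obtain ⟨t2, hta, htb⟩ := readWord_cons_some hs
          rw [ht1] at hta
          rwa [← Option.some.inj hta] at htb
        have hglen : g.length ≤ n := by
          have h := hlen
          rw [hγeq] at h
          simp only [List.length_cons, List.length_append, List.length_singleton] at h
          omega
        exact ih g hglen m htcore hgred2 hm1 γ₁' γ₂' s rfl hs'
end Core
section EdgeLoop

variable {A Q : Type} [DecidableEq A] {δ : Q → A × Bool → Option Q}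
  (hinv : ∀ (p q : Q) (a : A) (b : Bool), δ p (a, b) = some q ↔ δ q (a, !b) = some p)
include hinv

/-- given an edge `q --x--> r` between two core vertices, there is a cyclically reduced
loop at `q` starting with the letter `x` -/
lemma edge_loop {q r : Q} {x : A × Bool} (hq : q ∈ coreSet δ) (hr : r ∈ coreSet δ)
    (hx : δ q x = some r) : ∃ γ, CycRed (x :: γ) ∧ readWord δ q (x :: γ) = some q := by
  obtain ⟨u, hune, hucyc, huloop⟩ := coreP_iff.mpr hq
  obtain ⟨v, hvne, hvcyc, hvloop⟩ := coreP_iff.mpr hr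
  rcases eq_or_ne u.head? (some x) with hA | hA
  · -- u itself starts with x
    obtain ⟨ut, hu⟩ : ∃ ut, u = x :: ut := by
      cases u with
      | nil => exact absurd rfl hune
      | cons y ut => exact ⟨ut, by rw [show y = x by simpa using hA]⟩
    subst hu
    exact ⟨ut, hucyc, huloop⟩
  rcases eq_or_ne u.getLast? (some (invL x)) with hB | hB
  · -- inverse of u starts with x
    obtain ⟨ub, rfl⟩ := List.getLast?_eq_some_iff.mp hB
    have hcyc2 : CycRed (FreeGroup.invRev (ub ++ [invL x])) := hucyc.invRev
    rw [invRev_append, invRev_singleton, invL_invL] at hcyc2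
    have hloop2 : readWord δ q (FreeGroup.invRev (ub ++ [invL x])) = some q :=
      readWord_invRev hinv huloop
    rw [invRev_append, invRev_singleton, invL_invL] at hloop2
    exact ⟨FreeGroup.invRev ub, hcyc2, hloop2⟩
  rcases eq_or_ne v.head? (some (invL x)) with hC | hC
  · -- v starts with x⁻¹ : inverse of the rotation of v at q starts with x
    obtain ⟨vt, hv⟩ : ∃ vt, v = invL x :: vt := by
      cases v with
      | nil => exact absurd rfl hvne
      | cons y vt => exact ⟨vt, by rw [show y = invL x by simpa using hC]⟩
    subst hv
    obtain ⟨m, h1, h2⟩ := readWord_cons_some hvloop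
    have hrq : δ r (invL x) = some q := step_inv hinv hx
    have hmq : q = m := by rw [hrq] at h1; exact Option.some.inj h1
    rw [← hmq] at h2
    -- vt is a path q → r ; rotation vt ++ [invL x] is a CR loop at q
    have hrot : CycRed (vt ++ [invL x]) := CycRed.rotate (s := [invL x]) (t := vt) hvcyc
    have hcyc2 := hrot.invRev
    rw [invRev_append, invRev_singleton, invL_invL] at hcyc2
    have hloop2 : readWord δ q (FreeGroup.invRev (vt ++ [invL x])) = some q :=
      readWord_invRev hinv (readWord_append_of h2 (readWord_singleton.mpr hrq))
    rw [invRev_append, invRev_singleton, invL_invL] at hloop2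
    exact ⟨FreeGroup.invRev vt, hcyc2, hloop2⟩
  rcases eq_or_ne v.getLast? (some x) with hD | hD
  · -- v ends with x : its rotation at q starts with x
    obtain ⟨vb, rfl⟩ := List.getLast?_eq_some_iff.mp hD
    obtain ⟨m, h1, h2⟩ := readWord_append_some hvloop
    have hmx : δ m x = some r := readWord_singleton.mp h2
    obtain rfl : m = q := codet hinv hmx hx
    have hrot : CycRed ([x] ++ vb) := CycRed.rotate (s := vb) (t := [x]) hvcyc
    exact ⟨vb, hrot, readWord_append_of (readWord_singleton.mpr hx) h1⟩
  · -- generic : x (v) x⁻¹ (u)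
    obtain ⟨f, u', hu⟩ : ∃ f u', u = f :: u' := by
      cases u with
      | nil => exact absurd rfl hune
      | cons a b => exact ⟨a, b, rfl⟩
    obtain ⟨f', v', hv⟩ : ∃ f' v', v = f' :: v' := by
      cases v with
      | nil => exact absurd rfl hvne
      | cons a b => exact ⟨a, b, rfl⟩
    have hrq : δ r (invL x) = some q := step_inv hinv hx
    refine ⟨v ++ [invL x] ++ u, ?_, ?_⟩
    · rw [show x :: (v ++ [invL x] ++ u) = [x] ++ v ++ [invL x] ++ u by simp, cycRed_iff]
      constructor
      · rw [IsRed.append_iff]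
        refine ⟨?_, hucyc.isRed, ?_⟩
        · rw [IsRed.append_iff]
          refine ⟨?_, List.isChain_singleton _, ?_⟩
          · rw [show ([x] ++ v : List (A × Bool)) = x :: v from rfl, isRed_cons_iff]
            refine ⟨?_, hvcyc.isRed⟩
            intro z hz
            intro hbad
            apply hC
            rw [Option.mem_def] at hz
            rw [hz, hbad]
          · -- junction (last v, x⁻¹)
            intro z hz w hw
            rw [List.getLast?_append_of_ne_nil _ (by rw [hv]; simp : v ≠ [])] at hz
            simp only [List.head?_cons, Option.mem_def, Option.some.injEq] at hw
            subst hw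
            intro hbad
            rw [invL_eq_iff, invL_invL] at hbad
            exact hD (by rw [Option.mem_def] at hz; rw [hz, ← hbad])
        · -- junction (x⁻¹, head u)
          intro z hz w hw
          rw [List.getLast?_append_of_ne_nil _ (by simp : ([invL x] : List (A × Bool)) ≠ [])]
            at hz
          simp only [List.getLast?_singleton, Option.mem_def, Option.some.injEq] at hz
          subst hz
          rw [hu] at hw
          simp only [List.head?_cons, Option.mem_def, Option.some.injEq] at hw
          subst hw
          intro hbad
          rw [invL_invL] at hbad
          exact hA (by rw [hu, hbad]; rfl)
      · -- cyclic junction (last u, x)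
        intro z hz w hw
        rw [List.getLast?_append_of_ne_nil _ (by rw [hu]; simp : u ≠ [])] at hz
        rw [List.head?_append_of_ne_nil _ (by simp), List.head?_append_of_ne_nil _ (by simp),
          List.head?_append_of_ne_nil _ (by simp)] at hw
        simp only [List.head?_cons, Option.mem_def, Option.some.injEq] at hw
        subst hw
        intro hbad
        have hzx : invL x = z := by rw [hbad, invL_invL]
        exact hB (by rw [Option.mem_def] at hz; rw [hz, ← hzx])
    · rw [show x :: (v ++ [invL x] ++ u) = [x] ++ (v ++ ([invL x] ++ u)) by simp]
      refine readWord_append_of (readWord_singleton.mpr hx) ?_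
      refine readWord_append_of hvloop ?_
      exact readWord_append_of (readWord_singleton.mpr hrq) huloop

end EdgeLoop
section TwoAut

variable {A Q1 Q2 : Type} [DecidableEq A]

/-- `q'` corresponds to `q` under the conjugation by `g₀` : some path to `q` and some path
to `q'` are related by the coset condition. -/
def RelMap (δ1 : Q1 → A × Bool → Option Q1) (p1 : Q1) (δ2 : Q2 → A × Bool → Option Q2)
    (p2 : Q2) (g₀ : FreeGroup A) (S2 : Subgroup (FreeGroup A)) (q : Q1) (q' : Q2) : Prop :=
  ∃ w w', readWord δ1 p1 w = some q ∧ readWord δ2 p2 w' = some q' ∧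
    FreeGroup.mk w' * (g₀ * FreeGroup.mk w)⁻¹ ∈ S2

variable {δ1 : Q1 → A × Bool → Option Q1} {p1 : Q1} {S1 : Subgroup (FreeGroup A)}
  {δ2 : Q2 → A × Bool → Option Q2} {p2 : Q2} {S2 : Subgroup (FreeGroup A)}
  {g₀ : FreeGroup A}
  (hinv1 : ∀ (p q : Q1) (a : A) (b : Bool), δ1 p (a, b) = some q ↔ δ1 q (a, !b) = some p)
  (hlink1 : ∀ w : List (A × Bool), FreeGroup.reduce w = w →
      (FreeGroup.mk w ∈ S1 ↔ readWord δ1 p1 w = some p1))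
  (hinv2 : ∀ (p q : Q2) (a : A) (b : Bool), δ2 p (a, b) = some q ↔ δ2 q (a, !b) = some p)
  (hlink2 : ∀ w : List (A × Bool), FreeGroup.reduce w = w →
      (FreeGroup.mk w ∈ S2 ↔ readWord δ2 p2 w = some p2))
  (hg : ∀ x : FreeGroup A, x ∈ S1 ↔ g₀ * x * g₀⁻¹ ∈ S2)

include hinv1 hlink1 hinv2 hlink2 hg

/-- totality of `RelMap` on the core, with control on the loop -/
lemma relMap_total_loop (hconn1 : ∀ q : Q1, ∃ w, readWord δ1 p1 w = some q)
    {q : Q1} {c : List (A × Bool)} (hcne : c ≠ []) (hccyc : CycRed c)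
    (hcloop : readWord δ1 q c = some q) :
    ∃ q', RelMap δ1 p1 δ2 p2 g₀ S2 q q' ∧ readWord δ2 q' c = some q' := by
  obtain ⟨w, hw⟩ := hconn1 q
  have hmem1 : FreeGroup.mk w * FreeGroup.mk c * (FreeGroup.mk w)⁻¹ ∈ S1 := by
    have : readWord δ1 p1 (w ++ c ++ FreeGroup.invRev w) = some p1 :=
      readWord_append_of (readWord_append_of hw hcloop) (readWord_invRev hinv1 hw)
    have := loop_mem hinv1 hlink1 this
    rwa [← FreeGroup.mul_mk, ← FreeGroup.mul_mk, ← FreeGroup.inv_mk] at this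
  set g : FreeGroup A := g₀ * FreeGroup.mk w with hgdef
  have hmem2 : FreeGroup.mk g.toWord * FreeGroup.mk c * (FreeGroup.mk g.toWord)⁻¹ ∈ S2 := by
    rw [FreeGroup.mk_toWord, hgdef]
    have := (hg _).mp hmem1
    convert this using 1
    group
  obtain ⟨q', w', hw', hloop', hcos'⟩ := lemmaF hinv2 hlink2 g.toWord
    (isRed_iff.mpr (FreeGroup.reduce_toWord g)) c hcne hccyc hmem2
  rw [FreeGroup.mk_toWord] at hcos'
  exact ⟨q', ⟨w, w', hw, hw', hcos'⟩, hloop'⟩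

/-- functionality of `RelMap` -/
lemma relMap_func {q : Q1} {q'₁ q'₂ : Q2} (h1 : RelMap δ1 p1 δ2 p2 g₀ S2 q q'₁)
    (h2 : RelMap δ1 p1 δ2 p2 g₀ S2 q q'₂) : q'₁ = q'₂ := by
  obtain ⟨w₁, w'₁, hw₁, hw'₁, ha⟩ := h1
  obtain ⟨w₂, w'₂, hw₂, hw'₂, hb⟩ := h2
  have hc : FreeGroup.mk w₁ * (FreeGroup.mk w₂)⁻¹ ∈ S1 := paths_coset hinv1 hlink1 hw₁ hw₂
  have hc' := (hg _).mp hc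
  have key : FreeGroup.mk w'₁ * (FreeGroup.mk w'₂)⁻¹ =
      (FreeGroup.mk w'₁ * (g₀ * FreeGroup.mk w₁)⁻¹) *
      (g₀ * (FreeGroup.mk w₁ * (FreeGroup.mk w₂)⁻¹) * g₀⁻¹) *
      (FreeGroup.mk w'₂ * (g₀ * FreeGroup.mk w₂)⁻¹)⁻¹ := by group
  exact coset_state hinv2 hlink2 hw'₁ hw'₂ (key ▸ mul_mem (mul_mem ha hc') (inv_mem hb))

/-- injectivity of `RelMap` -/
lemma relMap_inj {q₁ q₂ : Q1} {q' : Q2} (h1 : RelMap δ1 p1 δ2 p2 g₀ S2 q₁ q')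
    (h2 : RelMap δ1 p1 δ2 p2 g₀ S2 q₂ q') : q₁ = q₂ := by
  obtain ⟨w₁, w'₁, hw₁, hw'₁, ha⟩ := h1
  obtain ⟨w₂, w'₂, hw₂, hw'₂, hb⟩ := h2
  have hc : FreeGroup.mk w'₁ * (FreeGroup.mk w'₂)⁻¹ ∈ S2 := paths_coset hinv2 hlink2 hw'₁ hw'₂
  have key : g₀ * (FreeGroup.mk w₁ * (FreeGroup.mk w₂)⁻¹) * g₀⁻¹ =
      (FreeGroup.mk w'₁ * (g₀ * FreeGroup.mk w₁)⁻¹)⁻¹ *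
      (FreeGroup.mk w'₁ * (FreeGroup.mk w'₂)⁻¹) *
      (FreeGroup.mk w'₂ * (g₀ * FreeGroup.mk w₂)⁻¹) := by group
  have : FreeGroup.mk w₁ * (FreeGroup.mk w₂)⁻¹ ∈ S1 :=
    (hg _).mpr (key ▸ mul_mem (mul_mem (inv_mem ha) hc) hb)
  exact coset_state hinv1 hlink1 hw₁ hw₂ this

/-- totality on the core -/
lemma relMap_total (hconn1 : ∀ q : Q1, ∃ w, readWord δ1 p1 w = some q)
    {q : Q1} (hq : q ∈ coreSet δ1) :
    ∃ q', q' ∈ coreSet δ2 ∧ RelMap δ1 p1 δ2 p2 g₀ S2 q q' := by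
  obtain ⟨u, hune, hucyc, huloop⟩ := coreP_iff.mpr hq
  obtain ⟨q', hrel, hloop⟩ := relMap_total_loop hinv1 hlink1 hinv2 hlink2 hg hconn1
    hune hucyc huloop
  exact ⟨q', coreP_iff.mp ⟨u, hune, hucyc, hloop⟩, hrel⟩

/-- image of an edge of the core -/
lemma relMap_edge (hconn1 : ∀ q : Q1, ∃ w, readWord δ1 p1 w = some q)
    {q r : Q1} {q' : Q2} {x : A × Bool} (hq : q ∈ coreSet δ1) (hr : r ∈ coreSet δ1)
    (hrel : RelMap δ1 p1 δ2 p2 g₀ S2 q q') (hx : δ1 q x = some r) :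
    ∃ r', RelMap δ1 p1 δ2 p2 g₀ S2 r r' ∧ δ2 q' x = some r' ∧ r' ∈ coreSet δ2 := by
  obtain ⟨γ, hγcyc, hγloop⟩ := edge_loop hinv1 hq hr hx
  obtain ⟨q'', hrel'', hloop''⟩ := relMap_total_loop hinv1 hlink1 hinv2 hlink2 hg hconn1
    (by simp : (x :: γ) ≠ []) hγcyc hγloop
  obtain rfl : q'' = q' := relMap_func hinv1 hlink1 hinv2 hlink2 hg hrel'' hrel
  obtain ⟨r', hr'1, hr'2⟩ := readWord_cons_some hloop''
  obtain ⟨w, w', hw, hw', hcos⟩ := hrel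
  refine ⟨r', ⟨w ++ [x], w' ++ [x], ?_, ?_, ?_⟩, hr'1, ?_⟩
  · exact readWord_append_of hw (readWord_singleton.mpr hx)
  · exact readWord_append_of hw' (readWord_singleton.mpr hr'1)
  · have key : FreeGroup.mk (w' ++ [x]) * (g₀ * FreeGroup.mk (w ++ [x]))⁻¹ =
        FreeGroup.mk w' * (g₀ * FreeGroup.mk w)⁻¹ := by
      rw [← FreeGroup.mul_mk, ← FreeGroup.mul_mk]
      group
    rw [key]; exact hcos
  · rw [← coreP_iff]
    refine ⟨γ ++ [x], by simp, ?_, readWord_append_of hr'2 (readWord_singleton.mpr hr'1)⟩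
    exact CycRed.rotate (s := [x]) (t := γ) hγcyc

end TwoAut
section Transport

variable {A Q1 Q2 : Type} [DecidableEq A]
  {δ1 : Q1 → A × Bool → Option Q1} {δ2 : Q2 → A × Bool → Option Q2}

/-- transport of a core-visiting path along a core map preserving edges -/
lemma transport (f : {q : Q1 // q ∈ coreSet δ1} → {q : Q2 // q ∈ coreSet δ2})
    (hedge : ∀ (a b : {q : Q1 // q ∈ coreSet δ1}) (x : A × Bool),
      δ1 a.1 x = some b.1 → δ2 (f a).1 x = some (f b).1) :
    ∀ (γ : List (A × Bool)) (q s : {q : Q1 // q ∈ coreSet δ1}),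
      readWord δ1 q.1 γ = some s.1 →
      (∀ γ₁ γ₂ t, γ = γ₁ ++ γ₂ → readWord δ1 q.1 γ₁ = some t → t ∈ coreSet δ1) →
      readWord δ2 (f q).1 γ = some (f s).1 := by
  intro γ
  induction γ with
  | nil =>
    intro q s hread _
    rw [readWord_nil] at hread ⊢
    rw [show q = s from Subtype.ext (Option.some.inj hread)]
  | cons x γ' ih =>
    intro q s hread hvis
    obtain ⟨m, hm1, hm2⟩ := readWord_cons_some hread
    have hmcore : m ∈ coreSet δ1 := by
      refine hvis [x] γ' m rfl ?_
      rw [readWord_singleton]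
      exact hm1
    have hstep := hedge q ⟨m, hmcore⟩ x hm1
    rw [readWord_cons, hstep]
    simp only [Option.bind_some]
    refine ih ⟨m, hmcore⟩ s hm2 ?_
    intro γ₁ γ₂ t hsplit ht
    refine hvis (x :: γ₁) γ₂ t (by rw [hsplit]; rfl) ?_
    rw [readWord_cons, hm1]
    exact ht

variable {p1 : Q1} {S1 : Subgroup (FreeGroup A)} {p2 : Q2} {S2 : Subgroup (FreeGroup A)}

/-- one direction of the conjugacy conclusion from a core isomorphism -/
lemma oneDir
    (hinv1 : ∀ (p q : Q1) (a : A) (b : Bool), δ1 p (a, b) = some q ↔ δ1 q (a, !b) = some p)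
    (hlink1 : ∀ w : List (A × Bool), FreeGroup.reduce w = w →
      (FreeGroup.mk w ∈ S1 ↔ readWord δ1 p1 w = some p1))
    (hinv2 : ∀ (p q : Q2) (a : A) (b : Bool), δ2 p (a, b) = some q ↔ δ2 q (a, !b) = some p)
    (hlink2 : ∀ w : List (A × Bool), FreeGroup.reduce w = w →
      (FreeGroup.mk w ∈ S2 ↔ readWord δ2 p2 w = some p2))
    (f : {q : Q1 // q ∈ coreSet δ1} → {q : Q2 // q ∈ coreSet δ2})
    (hedge : ∀ (a b : {q : Q1 // q ∈ coreSet δ1}) (x : A × Bool),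
      δ1 a.1 x = some b.1 → δ2 (f a).1 x = some (f b).1)
    (q₀ : {q : Q1 // q ∈ coreSet δ1}) (w₀ w₀' : List (A × Bool))
    (hw₀ : readWord δ1 p1 w₀ = some q₀.1) (hw₀' : readWord δ2 p2 w₀' = some (f q₀).1)
    {x : FreeGroup A} (hx : x ∈ S1) :
    (FreeGroup.mk w₀' * (FreeGroup.mk w₀)⁻¹) * x *
      (FreeGroup.mk w₀' * (FreeGroup.mk w₀)⁻¹)⁻¹ ∈ S2 := by
  set γ : List (A × Bool) := FreeGroup.reduce (FreeGroup.invRev w₀ ++ (x.toWord ++ w₀))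
    with hγdef
  have hγloop : readWord δ1 q₀.1 γ = some q₀.1 := by
    refine readWord_reduce hinv1 ?_
    exact readWord_append_of (readWord_invRev hinv1 hw₀)
      (readWord_append_of (mem_loop hinv1 hlink1 hx) hw₀)
  have hγred : IsRed γ := hγdef ▸ isRed_reduce _
  have hvis : ∀ γ₁ γ₂ t, γ = γ₁ ++ γ₂ → readWord δ1 q₀.1 γ₁ = some t → t ∈ coreSet δ1 :=
    visited_core hinv1 γ.length γ le_rfl q₀.1 q₀.2 hγred hγloop
  have hγ2 : readWord δ2 (f q₀).1 γ = some (f q₀).1 := transport f hedge γ q₀ q₀ hγloop hvis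
  have hW : readWord δ2 p2 (w₀' ++ γ ++ FreeGroup.invRev w₀') = some p2 :=
    readWord_append_of (readWord_append_of hw₀' hγ2) (readWord_invRev hinv2 hw₀')
  have hmem := loop_mem hinv2 hlink2 hW
  rw [← FreeGroup.mul_mk, ← FreeGroup.mul_mk, ← FreeGroup.inv_mk] at hmem
  have hmkγ : FreeGroup.mk γ = (FreeGroup.mk w₀)⁻¹ * (x * FreeGroup.mk w₀) := by
    rw [hγdef, FreeGroup.reduce.self, ← FreeGroup.mul_mk, ← FreeGroup.mul_mk,
      ← FreeGroup.inv_mk, FreeGroup.mk_toWord]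
  rw [hmkγ] at hmem
  have heq : (FreeGroup.mk w₀' * (FreeGroup.mk w₀)⁻¹) * x *
      (FreeGroup.mk w₀' * (FreeGroup.mk w₀)⁻¹)⁻¹ =
      FreeGroup.mk w₀' * ((FreeGroup.mk w₀)⁻¹ * (x * FreeGroup.mk w₀)) * (FreeGroup.mk w₀')⁻¹ :=
    by group
  rw [heq]
  exact hmem

end Transport

section CycDecomp

variable {A : Type} [DecidableEq A]

lemma toWord_ne_nil {x : FreeGroup A} (hx : x ≠ 1) : x.toWord ≠ [] := by
  intro h
  apply hx
  have := congrArg FreeGroup.mk h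
  rwa [FreeGroup.mk_toWord, ← FreeGroup.one_eq_mk] at this

/-- cyclic reduction : every nontrivial element is conjugate to a nonempty cyclically
reduced word -/
lemma cyc_decomp : ∀ (n : ℕ) (x : FreeGroup A), x.toWord.length ≤ n → x ≠ 1 →
    ∃ (g : FreeGroup A) (c : List (A × Bool)), c ≠ [] ∧ CycRed c ∧
      x = g * FreeGroup.mk c * g⁻¹ := by
  intro n
  induction n with
  | zero =>
    intro x hlen hx
    exact absurd (List.length_eq_zero_iff.mp (Nat.le_zero.mp hlen)) (toWord_ne_nil hx)
  | succ n ih =>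
    intro x hlen hx
    set r := x.toWord with hrdef
    have hrred : IsRed r := isRed_iff.mpr (FreeGroup.reduce_toWord x)
    have hrne : r ≠ [] := toWord_ne_nil hx
    by_cases hcyc : CycRed r
    · exact ⟨1, r, hrne, hcyc, by rw [FreeGroup.mk_toWord]; group⟩
    · obtain ⟨y, r', hr⟩ : ∃ y r', x.toWord = y :: r' := by
        cases h : x.toWord with
        | nil => rw [hrdef] at hrne; exact absurd h hrne
        | cons a b => exact ⟨a, b, rfl⟩
      obtain ⟨m, x', hr'⟩ : ∃ m x', r' = m ++ [x'] := by
        rcases List.eq_nil_or_concat r' with h | ⟨l, e, h⟩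
        · exfalso
          apply hcyc
          rw [hrdef, hr, h, cycRed_iff]
          refine ⟨List.isChain_singleton _, ?_⟩
          intro a ha b hb
          simp only [List.getLast?_singleton, List.head?_cons, Option.mem_def,
            Option.some.injEq] at ha hb
          rw [← ha, ← hb]
          exact fun hbad => (invL_ne y) (by rw [← hbad])
        · exact ⟨l, e, by rw [h]; simp⟩
      have hrx : x.toWord = y :: (m ++ [x']) := by rw [hr, hr']
      have hyx : y = invL x' := by
        rw [hrdef] at hcyc
        rw [cycRed_iff] at hcyc
        push_neg at hcyc
        obtain ⟨a, ha, b, hb, hab⟩ := hcyc (hrdef ▸ hrred)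
        have h1 : x.toWord.getLast? = some x' := by
          rw [hrx, show y :: (m ++ [x']) = (y :: m) ++ [x'] by simp]
          rw [List.getLast?_append_of_ne_nil _ (by simp : ([x'] : List (A × Bool)) ≠ [])]
          rfl
        have h2 : x.toWord.head? = some y := by rw [hrx]; rfl
        rw [h1, Option.mem_def, Option.some.injEq] at ha
        rw [h2, Option.mem_def, Option.some.injEq] at hb
        rw [← ha, ← hb] at hab
        exact not_not.mp hab
      have hmred : IsRed m := by
        have h0 : IsRed x.toWord := hrdef ▸ hrred
        rw [hrx] at h0
        have h2 := (isRed_cons_iff.mp h0).2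
        exact (IsRed.append_iff.mp h2).1
      have hxinv : (FreeGroup.mk [invL x'])⁻¹ = FreeGroup.mk [x'] := by
        rw [FreeGroup.inv_mk, invRev_singleton, invL_invL]
      have hxz : x = FreeGroup.mk [invL x'] * FreeGroup.mk m *
          (FreeGroup.mk [invL x'])⁻¹ := by
        conv_lhs => rw [← FreeGroup.mk_toWord (x := x)]
        rw [hrx, hyx, hxinv]
        rw [show invL x' :: (m ++ [x']) = ([invL x'] ++ m) ++ [x'] by simp]
        rw [← FreeGroup.mul_mk, ← FreeGroup.mul_mk]
      have hzne : FreeGroup.mk m ≠ 1 := by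
        intro h
        apply hx
        rw [hxz, h]
        group
      have hzlen : (FreeGroup.mk m).toWord.length ≤ n := by
        have hmz : (FreeGroup.mk m).toWord = m := by
          rw [FreeGroup.toWord_mk, reduce_eq_of_isRed hmred]
        rw [hmz]
        have h3 := hlen
        rw [hrdef, hrx] at h3
        simp only [List.length_cons, List.length_append, List.length_singleton] at h3
        omega
      obtain ⟨g', c, hcne, hccyc, hzeq⟩ := ih (FreeGroup.mk m) hzlen hzne
      refine ⟨FreeGroup.mk [invL x'] * g', c, hcne, hccyc, ?_⟩
      rw [hxz, hzeq]
      group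

end CycDecomp

/-- Two nontrivial f.g. subgroups `H, K ≤ F_A`, with Stallings automata
`(QH, δH, pH)` and `(QK, δK, pK)`, are conjugate in `F_A` iff the cores of their
Stallings automata are isomorphic as `Ã`-labeled graphs. -/
theorem stmt_18 {A QH QK : Type} [DecidableEq A] [Fintype QH] [Fintype QK]
    (H K : Subgroup (FreeGroup A))
    (δH : QH → A × Bool → Option QH) (pH : QH)
    (δK : QK → A × Bool → Option QK) (pK : QK)
    -- (QH, δH, pH) is the Stallings automaton of H:
    (hinvH : ∀ (p q : QH) (a : A) (b : Bool), δH p (a, b) = some q ↔ δH q (a, !b) = some p)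
    (hconnH : ∀ q : QH, ∃ w : List (A × Bool), readWord δH pH w = some q)
    (hdegH : ∀ q : QH, q ≠ pH → 2 ≤ {x : A × Bool | (δH q x).isSome}.ncard)
    (hlinkH : ∀ w : List (A × Bool), FreeGroup.reduce w = w →
      (FreeGroup.mk w ∈ H ↔ readWord δH pH w = some pH))
    -- (QK, δK, pK) is the Stallings automaton of K:
    (hinvK : ∀ (p q : QK) (a : A) (b : Bool), δK p (a, b) = some q ↔ δK q (a, !b) = some p)
    (hconnK : ∀ q : QK, ∃ w : List (A × Bool), readWord δK pK w = some q)
    (hdegK : ∀ q : QK, q ≠ pK → 2 ≤ {x : A × Bool | (δK q x).isSome}.ncard)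
    (hlinkK : ∀ w : List (A × Bool), FreeGroup.reduce w = w →
      (FreeGroup.mk w ∈ K ↔ readWord δK pK w = some pK))
    (hHbot : H ≠ ⊥) (hKbot : K ≠ ⊥) :
    -- H and K are conjugate iff the cores are isomorphic labeled graphs
    (∃ g : FreeGroup A, ∀ x : FreeGroup A, x ∈ H ↔ g * x * g⁻¹ ∈ K) ↔
      (∃ e : {q : QH // q ∈ coreSet δH} ≃ {q : QK // q ∈ coreSet δK},
        ∀ (p q : {q : QH // q ∈ coreSet δH}) (x : A × Bool),
          δH p.1 x = some q.1 ↔ δK (e p).1 x = some (e q).1) := by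
  constructor
  · -- conjugate ⇒ isomorphic cores
    rintro ⟨g₀, hg⟩
    have hgK : ∀ x : FreeGroup A, x ∈ K ↔ g₀⁻¹ * x * (g₀⁻¹)⁻¹ ∈ H := by
      intro x
      rw [inv_inv]
      constructor
      · intro hx
        apply (hg _).mpr
        have : g₀ * (g₀⁻¹ * x * g₀) * g₀⁻¹ = x := by group
        rwa [this]
      · intro hx
        have := (hg _).mp hx
        have heq : g₀ * (g₀⁻¹ * x * g₀) * g₀⁻¹ = x := by group
        rwa [heq] at this
    have htot1 : ∀ q : {q : QH // q ∈ coreSet δH},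
        ∃ q', q' ∈ coreSet δK ∧ RelMap δH pH δK pK g₀ K q.1 q' := fun q =>
      relMap_total hinvH hlinkH hinvK hlinkK hg hconnH q.2
    have htot2 : ∀ q' : {q : QK // q ∈ coreSet δK},
        ∃ q, q ∈ coreSet δH ∧ RelMap δK pK δH pH g₀⁻¹ H q'.1 q := fun q' =>
      relMap_total hinvK hlinkK hinvH hlinkH hgK hconnK q'.2
    set F : {q : QH // q ∈ coreSet δH} → {q : QK // q ∈ coreSet δK} :=
      fun q => ⟨(htot1 q).choose, (htot1 q).choose_spec.1⟩ with hFdef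
    have hF : ∀ q, RelMap δH pH δK pK g₀ K q.1 (F q).1 := fun q => (htot1 q).choose_spec.2
    set G : {q : QK // q ∈ coreSet δK} → {q : QH // q ∈ coreSet δH} :=
      fun q' => ⟨(htot2 q').choose, (htot2 q').choose_spec.1⟩ with hGdef
    have hG : ∀ q', RelMap δK pK δH pH g₀⁻¹ H q'.1 (G q').1 := fun q' =>
      (htot2 q').choose_spec.2
    have hflip : ∀ (q : QH) (q' : QK), RelMap δH pH δK pK g₀ K q q' →
        RelMap δK pK δH pH g₀⁻¹ H q' q := by
      rintro q q' ⟨w, w', hw, hw', hcos⟩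
      refine ⟨w', w, hw', hw, ?_⟩
      apply (hg _).mpr
      have heq : g₀ * (FreeGroup.mk w * (g₀⁻¹ * FreeGroup.mk w')⁻¹) * g₀⁻¹ =
          (FreeGroup.mk w' * (g₀ * FreeGroup.mk w)⁻¹)⁻¹ := by group
      rw [heq]
      exact inv_mem hcos
    have hflip2 : ∀ (q : QH) (q' : QK), RelMap δK pK δH pH g₀⁻¹ H q' q →
        RelMap δH pH δK pK g₀ K q q' := by
      rintro q q' ⟨w', w, hw', hw, hcos⟩
      refine ⟨w, w', hw, hw', ?_⟩
      have h1 := (hg _).mp hcos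
      have heq : g₀ * (FreeGroup.mk w * (g₀⁻¹ * FreeGroup.mk w')⁻¹) * g₀⁻¹ =
          (FreeGroup.mk w' * (g₀ * FreeGroup.mk w)⁻¹)⁻¹ := by group
      rw [heq] at h1
      simpa using inv_mem h1
    have hGF : ∀ q, G (F q) = q := by
      intro q
      apply Subtype.ext
      exact relMap_func hinvK hlinkK hinvH hlinkH hgK (hG (F q)) (hflip q.1 (F q).1 (hF q))
    have hFG : ∀ q', F (G q') = q' := by
      intro q'
      apply Subtype.ext
      exact relMap_func hinvH hlinkH hinvK hlinkK hg (hF (G q')) (hflip2 (G q').1 q'.1 (hG q'))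
    refine ⟨Equiv.mk F G hGF hFG, ?_⟩
    intro a b x
    simp only [Equiv.coe_fn_mk]
    constructor
    · intro hx
      obtain ⟨r', hrel, hr'edge, _⟩ :=
        relMap_edge hinvH hlinkH hinvK hlinkK hg hconnH a.2 b.2 (hF a) hx
      have : r' = (F b).1 := relMap_func hinvH hlinkH hinvK hlinkK hg hrel (hF b)
      rwa [this] at hr'edge
    · intro hx
      obtain ⟨r, hrel, hredge, _⟩ :=
        relMap_edge hinvK hlinkK hinvH hlinkH hgK hconnK (F a).2 (F b).2 (hG (F a)) hx
      have h1 : r = (G (F b)).1 := relMap_func hinvK hlinkK hinvH hlinkH hgK hrel (hG (F b))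
      rw [h1, hGF b] at hredge
      rw [show (G (F a)) = a from hGF a] at hredge
      exact hredge
  · -- isomorphic cores ⇒ conjugate
    rintro ⟨e, he⟩
    obtain ⟨⟨x₀, hx₀H⟩, hx₀⟩ := Subgroup.ne_bot_iff_exists_ne_one.mp hHbot
    have hx₀1 : x₀ ≠ 1 := by
      intro h
      apply hx₀
      exact Subtype.ext h
    obtain ⟨g, c, hcne, hccyc, hxeq⟩ := cyc_decomp x₀.toWord.length x₀ le_rfl hx₀1
    have hmem : FreeGroup.mk g.toWord * FreeGroup.mk c * (FreeGroup.mk g.toWord)⁻¹ ∈ H := by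
      rw [FreeGroup.mk_toWord, ← hxeq]
      exact hx₀H
    obtain ⟨q₀, wF, hwF, hloop, _⟩ := lemmaF hinvH hlinkH g.toWord
      (isRed_iff.mpr (FreeGroup.reduce_toWord g)) c hcne hccyc hmem
    have hq₀ : q₀ ∈ coreSet δH := coreP_iff.mp ⟨c, hcne, hccyc, hloop⟩
    obtain ⟨w₀, hw₀⟩ := hconnH q₀
    obtain ⟨w₀', hw₀'⟩ := hconnK (e ⟨q₀, hq₀⟩).1
    refine ⟨FreeGroup.mk w₀' * (FreeGroup.mk w₀)⁻¹, ?_⟩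
    intro x
    constructor
    · intro hx
      exact oneDir hinvH hlinkH hinvK hlinkK e (fun a b y h => (he a b y).mp h)
        ⟨q₀, hq₀⟩ w₀ w₀' hw₀ hw₀' hx
    · intro hx
      have hedge2 : ∀ (a b : {q : QK // q ∈ coreSet δK}) (y : A × Bool),
          δK a.1 y = some b.1 → δH (e.symm a).1 y = some (e.symm b).1 := by
        intro a b y h
        apply (he (e.symm a) (e.symm b) y).mpr
        rw [Equiv.apply_symm_apply, Equiv.apply_symm_apply]
        exact h
      have h2 := oneDir hinvK hlinkK hinvH hlinkH e.symm hedge2 (e ⟨q₀, hq₀⟩) w₀' w₀ hw₀'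
        (by rw [Equiv.symm_apply_apply]; exact hw₀) hx
      have heq : (FreeGroup.mk w₀ * (FreeGroup.mk w₀')⁻¹) *
          ((FreeGroup.mk w₀' * (FreeGroup.mk w₀)⁻¹) * x *
            (FreeGroup.mk w₀' * (FreeGroup.mk w₀)⁻¹)⁻¹) *
          (FreeGroup.mk w₀ * (FreeGroup.mk w₀')⁻¹)⁻¹ = x := by group
      rwa [heq] at h2
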